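/- For gcd(s,k) = 1, the binomial f(x) = x^{q^s} + δ x^{q^{2s}} over F_{q^k} is a Sidon space polynomial. -/
import Mathlib


/-- The multiplicative coset `a·F_q` inside `L`. -/
def qcoset (K : Type*) {L : Type*} [Field K] [Field L] [Algebra K L] (a : L) : Set L :=
  Set.range fun x : K => algebraMap K L x * a

/-- `V ⊆ L` is a Sidon space (as a set): for nonzero `a,b,c,d ∈ V` with `ab = cd`
we have `{aF_q, bF_q} = {cF_q, dF_q}`. -/
def IsSidonSet (K : Type*) {L : Type*} [Field K] [Field L] [Algebra K L] (V : Set L) : Prop :=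
  ∀ a ∈ V, ∀ b ∈ V, ∀ c ∈ V, ∀ d ∈ V,
    a ≠ 0 → b ≠ 0 → c ≠ 0 → d ≠ 0 → a * b = c * d →
      ({qcoset K a, qcoset K b} : Set (Set L)) = {qcoset K c, qcoset K d}

/-- `f` is scattered: `f(a)/a = f(b)/b` for nonzero `a,b` forces `F_q`-proportionality. -/
def IsScattered (K : Type*) {M : Type*} [Field K] [Field M] [Algebra K M] (f : M → M) : Prop :=
  ∀ a b : M, a ≠ 0 → b ≠ 0 → f a * b = f b * a → ∃ c : K, b = algebraMap K M c * a

/-- `f` is a Sidon space polynomial: `S_{x₀,f} ∩ S_{x₁,f} = F_q` for all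
non-`F_q`-proportional `x₀, x₁`. -/
def IsSidonPoly (K : Type*) {M : Type*} [Field K] [Field M] [Algebra K M] (f : M → M) : Prop :=
  ∀ x₀ x₁ : M,
    ¬ (∃ c : K, x₁ = algebraMap K M c * x₀ ∨ x₀ = algebraMap K M c * x₁) →
    {l : M | f (l * x₀) = l * f x₀} ∩ {l : M | f (l * x₁) = l * f x₁}
      = Set.range (algebraMap K M)

/-- Injectivity of `x ↦ x ^ p ^ e` in characteristic `p`. -/
lemma aux_pow_p_inj {M : Type*} [Field M] {p : ℕ} (hp : p.Prime) [CharP M p] (e : ℕ)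
    {a b : M} (h : a ^ p ^ e = b ^ p ^ e) : a = b := by
  haveI : Fact p.Prime := ⟨hp⟩
  have hsub : (a - b) ^ p ^ e = a ^ p ^ e - b ^ p ^ e := sub_pow_char_pow a b e
  rw [h, sub_self] at hsub
  have : a - b = 0 := pow_eq_zero_iff (pow_ne_zero e hp.ne_zero) |>.mp hsub
  exact sub_eq_zero.mp this

/-- If `l` is fixed by the `s`-th and `k`-th iterates of the `Q`-power Frobenius, it is
fixed by the `gcd s k`-th iterate, where `Q = p ^ c`. -/
lemma aux_fix_gcd {M : Type*} [Field M] {p : ℕ} (hp : p.Prime) [CharP M p] (c : ℕ) (l : M) :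
    ∀ s k : ℕ, l ^ (p ^ c) ^ s = l → l ^ (p ^ c) ^ k = l → l ^ (p ^ c) ^ Nat.gcd s k = l := by
  have hmul : ∀ m t : ℕ, l ^ (p ^ c) ^ m = l → l ^ (p ^ c) ^ (m * t) = l := by
    intro m t hm
    induction t with
    | zero => simp
    | succ t ih => rw [Nat.mul_succ, pow_add, pow_mul, ih, hm]
  intro s k
  induction s, k using Nat.gcd.induction with
  | H0 n => intro _ hn; simpa using hn
  | H1 m n hm ih =>
    intro h1 h2
    rw [Nat.gcd_rec]
    refine ih ?_ h1
    -- show `l ^ (p^c) ^ (n % m) = l`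
    have ht : l ^ (p ^ c) ^ (m * (n / m)) = l := hmul m (n / m) h1
    have key : (l ^ (p ^ c) ^ (n % m)) ^ (p ^ c) ^ (m * (n / m))
        = l ^ (p ^ c) ^ (m * (n / m)) := by
      rw [ht, ← pow_mul, ← pow_add, Nat.add_comm, Nat.div_add_mod]
      exact h2
    simp only [← pow_mul p c] at key ⊢
    exact aux_pow_p_inj hp _ key

open Polynomial in
/-- An element of `M` satisfying `l ^ |K| = l` lies in the image of `K`. -/
lemma aux_mem_range {K M : Type*} [Field K] [Field M] [Algebra K M] [Fintype K] [Fintype M]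
    {l : M} (h : l ^ Fintype.card K = l) : ∃ d : K, l = algebraMap K M d := by
  classical
  set q := Fintype.card K with hq
  by_contra hcon
  push_neg at hcon
  have hinj : Function.Injective (algebraMap K M) := (algebraMap K M).injective
  set T : Finset M := Finset.univ.image (algebraMap K M) with hTdef
  have hT : T.card = q := by
    rw [hTdef, Finset.card_image_of_injective _ hinj, Finset.card_univ]
  have hq1 : 1 < q := Fintype.one_lt_card
  have hne : (X ^ q - X : M[X]) ≠ 0 := FiniteField.X_pow_card_sub_X_ne_zero M hq1
  have hsub : insert l T ⊆ (X ^ q - X : M[X]).roots.toFinset := by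
    intro x hx
    rw [Multiset.mem_toFinset, mem_roots hne, IsRoot.def, eval_sub, eval_pow, eval_X,
      sub_eq_zero]
    rcases Finset.mem_insert.mp hx with rfl | hx
    · exact h
    · obtain ⟨d, -, rfl⟩ := Finset.mem_image.mp hx
      rw [← map_pow, FiniteField.pow_card]
  have hlT : l ∉ T := by
    intro hl
    obtain ⟨d, -, hd⟩ := Finset.mem_image.mp hl
    exact hcon d hd.symm
  have h1 : (insert l T).card = q + 1 := by rw [Finset.card_insert_of_notMem hlT, hT]
  have h2 : (X ^ q - X : M[X]).roots.toFinset.card ≤ q := by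
    calc (X ^ q - X : M[X]).roots.toFinset.card
        ≤ Multiset.card (X ^ q - X : M[X]).roots := Multiset.toFinset_card_le _
      _ ≤ (X ^ q - X : M[X]).natDegree := card_roots' _
      _ = q := FiniteField.X_pow_card_sub_X_natDegree_eq M hq1
  have := Finset.card_le_card hsub
  omega

/-- for `gcd(s,k)=1`, `f(x) = x^{q^s} + δ x^{q^{2s}}` is a Sidon space
polynomial. -/
theorem stmt_13 {K M : Type*} [Field K] [Field M] [Algebra K M] [Fintype K] [Fintype M]
    (k : ℕ) (hk : Module.finrank K M = k)
    (δ : M) (s : ℕ) (hs : Nat.gcd s k = 1) (hs0 : 1 ≤ s) :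
    IsSidonPoly K
      (fun x : M => x ^ Fintype.card K ^ s + δ * x ^ Fintype.card K ^ (2 * s)) := by
  classical
  intro x₀ x₁ hprop
  set q := Fintype.card K with hq
  obtain ⟨p, hpchar⟩ := CharP.exists K
  haveI := hpchar
  have hp : p.Prime := CharP.char_is_prime K p
  haveI : CharP M p := charP_of_injective_algebraMap (algebraMap K M).injective p
  obtain ⟨c, -, hc⟩ := FiniteField.card K p
  have hcardM : Fintype.card M = q ^ k := by rw [← hk]; exact Module.card_eq_pow_finrank
  -- key: fixed by q^s-Frobenius implies in range of algebraMap
  have key : ∀ l : M, l ^ q ^ s = l → ∃ d : K, l = algebraMap K M d := by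
    intro l hl
    have hk' : l ^ q ^ k = l := by rw [← hcardM]; exact FiniteField.pow_card l
    have hg := aux_fix_gcd hp (c : ℕ) l s k (by rwa [← hc]) (by rwa [← hc])
    rw [hs, pow_one, ← hc] at hg
    exact aux_mem_range hg
  have hx0 : x₀ ≠ 0 := by
    rintro rfl
    exact hprop ⟨0, Or.inr (by simp)⟩
  have hx1 : x₁ ≠ 0 := by
    rintro rfl
    exact hprop ⟨0, Or.inl (by simp)⟩
  ext l
  simp only [Set.mem_inter_iff, Set.mem_setOf_eq, Set.mem_range, mul_pow]
  constructor
  · rintro ⟨h0, h1⟩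
    have e0 : (l ^ q ^ s - l) * x₀ ^ q ^ s + (δ * (l ^ q ^ (2 * s) - l)) * x₀ ^ q ^ (2 * s)
        = 0 := by linear_combination h0
    have e1 : (l ^ q ^ s - l) * x₁ ^ q ^ s + (δ * (l ^ q ^ (2 * s) - l)) * x₁ ^ q ^ (2 * s)
        = 0 := by linear_combination h1
    by_cases hB : δ * (l ^ q ^ (2 * s) - l) = 0
    · rw [hB, zero_mul, add_zero, mul_eq_zero] at e0
      rcases e0 with e0 | e0
      · obtain ⟨d, hd⟩ := key l (by linear_combination e0)
        exact ⟨d, hd.symm⟩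
      · exact absurd e0 (pow_ne_zero _ hx0)
    · have hA : l ^ q ^ s - l ≠ 0 := by
        intro hA0
        rw [hA0, zero_mul, zero_add, mul_eq_zero] at e0
        rcases e0 with e0 | e0
        · exact hB e0
        · exact pow_ne_zero _ hx0 e0
      have cross : x₀ ^ q ^ s * x₁ ^ q ^ (2 * s) = x₁ ^ q ^ s * x₀ ^ q ^ (2 * s) := by
        have h := mul_left_cancel₀ hA (show (l ^ q ^ s - l) * (x₀ ^ q ^ s * x₁ ^ q ^ (2 * s))
            = (l ^ q ^ s - l) * (x₁ ^ q ^ s * x₀ ^ q ^ (2 * s)) by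
          linear_combination x₁ ^ q ^ (2 * s) * e0 - x₀ ^ q ^ (2 * s) * e1)
        exact h
      have h2s : q ^ (2 * s) = q ^ s * q ^ s := by rw [two_mul, pow_add]
      have hpow : (x₀ * x₁ ^ q ^ s) ^ q ^ s = (x₁ * x₀ ^ q ^ s) ^ q ^ s := by
        rw [mul_pow, mul_pow, ← pow_mul, ← pow_mul, ← h2s]; exact cross
      have hqs : q ^ s = p ^ ((c : ℕ) * s) := by rw [hq, hc, ← pow_mul]
      have huv : x₀ * x₁ ^ q ^ s = x₁ * x₀ ^ q ^ s :=
        aux_pow_p_inj hp ((c : ℕ) * s) (by rw [← hqs]; exact hpow)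
      have hu : (x₁ / x₀) ^ q ^ s = x₁ / x₀ := by
        rw [div_pow, div_eq_div_iff (pow_ne_zero _ hx0) hx0]
        linear_combination huv
      obtain ⟨d, hd⟩ := key _ hu
      rw [div_eq_iff hx0] at hd
      exact absurd ⟨d, Or.inl hd⟩ hprop
  · rintro ⟨d, rfl⟩
    have hd : ∀ n : ℕ, (algebraMap K M d) ^ q ^ n = algebraMap K M d := fun n => by
      rw [← map_pow, FiniteField.pow_card_pow]
    constructor
    · rw [hd s, hd (2 * s)]; ring
    · rw [hd s, hd (2 * s)]; ring
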